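/- If W is a standard normal random variable and ζ is an independent Gamma(2,1) random variable (density z·e^{-z} on (0,∞)), then the distribution of |W·ζ| has density ρ(c) = √(2/π)·∫₀^∞ exp(-z - c²/(2z²)) dz with respect to Lebesgue measure on (0,∞). -/

import Mathlib

open MeasureTheory ProbabilityTheory Real

open Set
open scoped ENNReal NNReal


lemma ofReal_indicator_eq (A : Set ℝ) (f : ℝ → ℝ) :
    (fun z => ENNReal.ofReal (A.indicator f z)) = A.indicator (fun z => ENNReal.ofReal (f z)) := by
  ext z; by_cases h : z ∈ A <;> simp [h]

lemma lintegral_neg_preimage {g : ℝ → ℝ≥0∞} (hg : Measurable g)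
    (heven : ∀ x, g (-x) = g x) {A : Set ℝ} (hA : MeasurableSet A) :
    ∫⁻ x in (fun x : ℝ => -x) ⁻¹' A, g x = ∫⁻ x in A, g x := by
  have h := (Measure.measurePreserving_neg (volume : Measure ℝ)).setLIntegral_comp_preimage hA hg
  calc ∫⁻ x in (fun x : ℝ => -x) ⁻¹' A, g x
      = ∫⁻ x in (fun x : ℝ => -x) ⁻¹' A, g (-x) := by
        refine setLIntegral_congr_fun (measurable_neg hA) (fun x _ => (heven x).symm)
    _ = ∫⁻ x in A, g x := h

lemma sqrt_two_div_pi : 2 / Real.sqrt (2 * π) = Real.sqrt (2 / π) := by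
  have h2 : Real.sqrt (2 * π) = Real.sqrt 2 * Real.sqrt π := Real.sqrt_mul (by norm_num) _
  have hd : Real.sqrt (2 / π) = Real.sqrt 2 / Real.sqrt π := Real.sqrt_div (by norm_num) _
  have hs2 : Real.sqrt 2 * Real.sqrt 2 = 2 := Real.mul_self_sqrt (by norm_num)
  have hpi : (0:ℝ) < Real.sqrt π := Real.sqrt_pos.mpr Real.pi_pos
  have h2pos : (0:ℝ) < Real.sqrt 2 := Real.sqrt_pos.mpr (by norm_num)
  rw [h2, hd, div_eq_div_iff (by positivity) hpi.ne']
  ring_nf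
  nlinarith [hs2]

lemma arith_combine {z : ℝ} (hz : 0 < z) (c : ℝ) :
    z * Real.exp (-z) * (2 / (z * Real.sqrt (2 * π)) * Real.exp (-c ^ 2 / (2 * z ^ 2)))
      = Real.sqrt (2 / π) * Real.exp (-z - c ^ 2 / (2 * z ^ 2)) := by
  have he : Real.exp (-z - c ^ 2 / (2 * z ^ 2))
      = Real.exp (-z) * Real.exp (-c ^ 2 / (2 * z ^ 2)) := by
    rw [← Real.exp_add]; congr 1; ring
  rw [he, ← sqrt_two_div_pi]
  field_simp

lemma map_abs_mul_gaussian {z : ℝ} (hz : 0 < z) {s : Set ℝ} (hs : MeasurableSet s) :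
    (gaussianReal 0 1) ((fun w => |w * z|) ⁻¹' s)
      = ∫⁻ c in s ∩ Ioi 0,
          ENNReal.ofReal (2 / (z * Real.sqrt (2 * π)) * Real.exp (-c ^ 2 / (2 * z ^ 2))) := by
  set v : ℝ≥0 := ⟨z ^ 2, sq_nonneg z⟩ with hv_def
  have hv : v ≠ 0 := by
    intro h
    have h2 : z ^ 2 = 0 := congrArg Subtype.val h
    exact hz.ne' (pow_eq_zero_iff (n := 2) (by norm_num) |>.mp h2)
  have hcomp : (fun w : ℝ => |w * z|) = (fun x : ℝ => |x|) ∘ (fun w : ℝ => z * w) := by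
    funext w; simp [mul_comm]
  have hmap1 : Measure.map (fun w : ℝ => z * w) (gaussianReal 0 1) = gaussianReal 0 v := by
    rw [gaussianReal_map_const_mul (μ := 0) (v := 1) z]
    simp [hv_def]
    rfl
  have habs : Measurable (fun x : ℝ => |x|) := measurable_abs
  have hμeq : (gaussianReal 0 1) ((fun w => |w * z|) ⁻¹' s)
      = (gaussianReal 0 v) ((fun x : ℝ => |x|) ⁻¹' s) := by
    rw [hcomp, preimage_comp, ← hmap1,
      Measure.map_apply (measurable_const_mul z) (habs hs)]
  rw [hμeq, gaussianReal_of_var_ne_zero _ hv, withDensity_apply _ (habs hs)]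
  set g : ℝ → ℝ≥0∞ := gaussianPDF 0 v with hg_def
  have hgmeas : Measurable g := measurable_gaussianPDF 0 v
  have hgeven : ∀ x, g (-x) = g x := by
    intro x
    simp [hg_def, gaussianPDF, gaussianPDFReal, neg_sq]
  set B : Set ℝ := (fun x : ℝ => |x|) ⁻¹' s with hB_def
  have hBm : MeasurableSet B := habs hs
  have hB1 : B ∩ Ioi 0 = s ∩ Ioi 0 := by
    ext x; simp only [hB_def, mem_inter_iff, mem_preimage, mem_Ioi]
    constructor
    · rintro ⟨h1, h2⟩; exact ⟨by rwa [abs_of_pos h2] at h1, h2⟩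
    · rintro ⟨h1, h2⟩; exact ⟨by rwa [abs_of_pos h2], h2⟩
  have hB2 : B ∩ Iio 0 = (fun x : ℝ => -x) ⁻¹' (s ∩ Ioi 0) := by
    ext x; simp only [hB_def, mem_inter_iff, mem_preimage, mem_Iio, mem_Ioi]
    constructor
    · rintro ⟨h1, h2⟩; exact ⟨by rwa [abs_of_neg h2] at h1, by linarith⟩
    · rintro ⟨h1, h2⟩
      have hx : x < 0 := by linarith
      exact ⟨by rwa [abs_of_neg hx], hx⟩
  have hsplit : ∫⁻ x in B, g x
      = (∫⁻ x in B ∩ Ioi 0, g x) + ∫⁻ x in B ∩ Iio 0, g x := by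
    have hnull : (volume : Measure ℝ) ({0} : Set ℝ) = 0 := volume_singleton
    have hcover : B ⊆ (B ∩ Ioi 0) ∪ (B ∩ Iio 0) ∪ {0} := by
      intro x hx
      rcases lt_trichotomy x 0 with h | h | h
      · exact Or.inl (Or.inr ⟨hx, h⟩)
      · exact Or.inr (by simp [h])
      · exact Or.inl (Or.inl ⟨hx, h⟩)
    have hdisj : Disjoint (B ∩ Ioi 0) (B ∩ Iio 0) := by
      refine Set.disjoint_left.mpr ?_
      rintro x ⟨_, h1⟩ ⟨_, h2⟩
      simp only [mem_Ioi] at h1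
      simp only [mem_Iio] at h2
      linarith
    refine le_antisymm ?_ ?_
    · calc ∫⁻ x in B, g x ≤ ∫⁻ x in (B ∩ Ioi 0) ∪ (B ∩ Iio 0) ∪ {0}, g x :=
            lintegral_mono_set hcover
        _ ≤ (∫⁻ x in (B ∩ Ioi 0) ∪ (B ∩ Iio 0), g x) + ∫⁻ x in ({0} : Set ℝ), g x :=
            lintegral_union_le _ _ _
        _ = ∫⁻ x in (B ∩ Ioi 0) ∪ (B ∩ Iio 0), g x := by
            rw [setLIntegral_measure_zero _ _ hnull, add_zero]
        _ ≤ (∫⁻ x in B ∩ Ioi 0, g x) + ∫⁻ x in B ∩ Iio 0, g x := lintegral_union_le _ _ _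
    · have hsub : (B ∩ Ioi 0) ∪ (B ∩ Iio 0) ⊆ B := by
        rintro x (⟨h, _⟩ | ⟨h, _⟩) <;> exact h
      calc (∫⁻ x in B ∩ Ioi 0, g x) + ∫⁻ x in B ∩ Iio 0, g x
          = ∫⁻ x in (B ∩ Ioi 0) ∪ (B ∩ Iio 0), g x :=
            (lintegral_union (hBm.inter measurableSet_Iio) hdisj).symm
        _ ≤ ∫⁻ x in B, g x := lintegral_mono_set hsub
  rw [hsplit, hB1, hB2,
    lintegral_neg_preimage hgmeas hgeven (hs.inter measurableSet_Ioi),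
    ← lintegral_add_left hgmeas]
  refine setLIntegral_congr_fun (hs.inter measurableSet_Ioi) (fun c hc => ?_)
  have hcv : (v : ℝ) = z ^ 2 := rfl
  have hsq : Real.sqrt (2 * π * (z ^ 2)) = z * Real.sqrt (2 * π) := by
    rw [Real.sqrt_mul (by positivity) (z ^ 2), Real.sqrt_sq hz.le, mul_comm]
  have hpdf : gaussianPDFReal 0 v c
      = (z * Real.sqrt (2 * π))⁻¹ * Real.exp (-c ^ 2 / (2 * z ^ 2)) := by
    rw [gaussianPDFReal]
    rw [hcv, sub_zero, hsq]
  show g c + g c = ENNReal.ofReal (2 / (z * Real.sqrt (2 * π)) * Real.exp (-c ^ 2 / (2 * z ^ 2)))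
  have hnn : 0 ≤ gaussianPDFReal 0 v c := gaussianPDFReal_nonneg 0 v c
  rw [hg_def, gaussianPDF, ← ENNReal.ofReal_add hnn hnn, hpdf]
  congr 1
  rw [div_eq_mul_inv]
  ring


lemma integrable_inner (c : ℝ) :
    IntegrableOn (fun z => Real.exp (-z - c ^ 2 / (2 * z ^ 2))) (Ioi (0:ℝ)) := by
  have hg : IntegrableOn (fun z => Real.exp (-z)) (Ioi (0:ℝ)) := by
    simpa using exp_neg_integrableOn_Ioi (0:ℝ) (b := 1) one_pos
  refine hg.mono' ?_ ?_
  · exact (Measurable.stronglyMeasurable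
      (Real.measurable_exp.comp ((measurable_id.neg).sub
        ((measurable_const.pow measurable_const).div
          ((measurable_const.mul (measurable_id.pow measurable_const))))))).aestronglyMeasurable
  · refine ae_of_all _ fun z => ?_
    rw [Real.norm_eq_abs, abs_of_pos (Real.exp_pos _)]
    apply Real.exp_le_exp.mpr
    have : 0 ≤ c ^ 2 / (2 * z ^ 2) := div_nonneg (sq_nonneg c) (by positivity)
    linarith

lemma inner_lintegral (c : ℝ) :
    ∫⁻ z in Ioi (0:ℝ), ENNReal.ofReal (Real.sqrt (2 / π) * Real.exp (-z - c ^ 2 / (2 * z ^ 2)))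
      = ENNReal.ofReal (Real.sqrt (2 / π) *
          ∫ z in Ioi (0:ℝ), Real.exp (-z - c ^ 2 / (2 * z ^ 2))) := by
  rw [← integral_const_mul,
    ← ofReal_integral_eq_lintegral_ofReal
      ((integrable_inner c).const_mul _)
      (ae_of_all _ fun z => by positivity)]

theorem density_of_abs_product
    {Ω : Type*} [MeasurableSpace Ω] (P : Measure Ω) [IsProbabilityMeasure P]
    (W ζ : Ω → ℝ) (hW : Measurable W) (hζ : Measurable ζ)
    (hindep : IndepFun W ζ P)
    (hWlaw : Measure.map W P = gaussianReal 0 1)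
    (hζlaw : Measure.map ζ P =
      volume.withDensity (fun z =>
        ENNReal.ofReal (Set.indicator (Set.Ioi (0 : ℝ)) (fun z => z * Real.exp (-z)) z))) :
    Measure.map (fun ω => |W ω * ζ ω|) P =
      volume.withDensity (fun c =>
        ENNReal.ofReal (Set.indicator (Set.Ioi (0 : ℝ))
          (fun c => Real.sqrt (2 / Real.pi) *
            ∫ z in Set.Ioi (0 : ℝ), Real.exp (-z - c ^ 2 / (2 * z ^ 2))) c)) := by
  have hpair := (indepFun_iff_map_prod_eq_prod_map_map hW.aemeasurable hζ.aemeasurable).mp hindep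
  rw [hWlaw, hζlaw] at hpair
  have hmf : Measurable (fun p : ℝ × ℝ => |p.1 * p.2|) := (measurable_fst.mul measurable_snd).abs
  have hcomp : (fun ω => |W ω * ζ ω|)
      = (fun p : ℝ × ℝ => |p.1 * p.2|) ∘ (fun ω => (W ω, ζ ω)) := rfl
  rw [hcomp, ← Measure.map_map hmf (hW.prodMk hζ), hpair]
  ext s hs
  have hdensmeas : Measurable (fun z : ℝ =>
      ENNReal.ofReal ((Ioi (0:ℝ)).indicator (fun z => z * Real.exp (-z)) z)) := by
    rw [ofReal_indicator_eq]
    exact ((measurable_id.mul (Real.measurable_exp.comp measurable_neg)).ennreal_ofReal).indicator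
      measurableSet_Ioi
  have hG : Measurable (fun z : ℝ =>
      (gaussianReal 0 1) ((fun w => (w, z)) ⁻¹' ((fun p : ℝ × ℝ => |p.1 * p.2|) ⁻¹' s))) :=
    measurable_measure_prodMk_right (hmf hs)
  rw [Measure.map_apply hmf hs, Measure.prod_apply_symm (hmf hs),
    lintegral_withDensity_eq_lintegral_mul volume hdensmeas hG]
  have hpre : ∀ z : ℝ, ((fun w : ℝ => (w, z)) ⁻¹' ((fun p : ℝ × ℝ => |p.1 * p.2|) ⁻¹' s))
      = (fun w => |w * z|) ⁻¹' s := fun z => rfl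
  have hstep1 : ∫⁻ z, ((fun z : ℝ =>
        ENNReal.ofReal ((Ioi (0:ℝ)).indicator (fun z => z * Real.exp (-z)) z)) *
        fun z => (gaussianReal 0 1) ((fun w => (w, z)) ⁻¹' ((fun p : ℝ × ℝ => |p.1 * p.2|) ⁻¹' s))) z
      = ∫⁻ z in Ioi (0:ℝ), ENNReal.ofReal (z * Real.exp (-z)) *
          (gaussianReal 0 1) ((fun w => |w * z|) ⁻¹' s) := by
    rw [← lintegral_indicator measurableSet_Ioi]
    congr 1
    funext z
    by_cases h : (0:ℝ) < z <;>
      simp [h, hpre, Set.indicator_apply, -abs_mul]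
  rw [hstep1]
  have hstep2 : ∫⁻ z in Ioi (0:ℝ), ENNReal.ofReal (z * Real.exp (-z)) *
        (gaussianReal 0 1) ((fun w => |w * z|) ⁻¹' s)
      = ∫⁻ z in Ioi (0:ℝ), ∫⁻ c in s ∩ Ioi 0,
          ENNReal.ofReal (Real.sqrt (2 / π) * Real.exp (-z - c ^ 2 / (2 * z ^ 2))) := by
    refine setLIntegral_congr_fun measurableSet_Ioi (fun z hz => ?_)
    have hz' : (0:ℝ) < z := hz
    rw [map_abs_mul_gaussian hz' hs, ← lintegral_const_mul' _ _ ENNReal.ofReal_ne_top]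
    refine setLIntegral_congr_fun (hs.inter measurableSet_Ioi) (fun c _ => ?_)
    rw [← ENNReal.ofReal_mul (by positivity), arith_combine hz' c]
  rw [hstep2]
  have hswap : ∫⁻ z in Ioi (0:ℝ), ∫⁻ c in s ∩ Ioi 0,
        ENNReal.ofReal (Real.sqrt (2 / π) * Real.exp (-z - c ^ 2 / (2 * z ^ 2)))
      = ∫⁻ c in s ∩ Ioi 0, ∫⁻ z in Ioi (0:ℝ),
        ENNReal.ofReal (Real.sqrt (2 / π) * Real.exp (-z - c ^ 2 / (2 * z ^ 2))) := by
    refine lintegral_lintegral_swap (Measurable.aemeasurable ?_)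
    exact (measurable_const.mul (Real.measurable_exp.comp
      ((measurable_fst.neg).sub ((measurable_snd.pow measurable_const).div
        (measurable_const.mul (measurable_fst.pow measurable_const)))))).ennreal_ofReal
  rw [hswap, withDensity_apply _ hs, ofReal_indicator_eq,
    lintegral_indicator measurableSet_Ioi, Measure.restrict_restrict measurableSet_Ioi,
    inter_comm]
  exact setLIntegral_congr_fun (measurableSet_Ioi.inter hs)
    (fun c _ => inner_lintegral c)
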